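/- Let (X,d) be a metric space, K a nonempty subset of X, and A, B, S, T selfmaps of K. Suppose there exist a function ψ satisfying Condition-A and φ ∈ Φ such that the contractive inequality ψ(d(Sx,Ty), d(Sx,Ty)) ≤ φ(max{ψ(d(Ax,By), d(Ax,Sx)), ψ(d(Ax,By), d(By,Ty)), ψ(d(Ax,Sx), d(By,Ty)), ψ(d(By,Ty), d(Ax,Sx)), min{ψ(d(By,Sx), d(Ax,Sx)), ψ(d(Ax,Ty), d(By,Ty))}, min{ψ(d(By,Sx), d(By,Ty)), ψ(d(Ax,Ty), d(Ax,Sx))}}) holds for all x, y ∈ K. Let {xₙ} be a sequence in K and define yₙ by y₂ₙ = Tx₂ₙ = Ax₂ₙ₊₁ and y₂ₙ₊₁ = Sx₂ₙ₊₁ = Bx₂ₙ₊₂ for all n ≥ 0. Then {yₙ} is a Cauchy sequence in K. -/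

import Mathlib

open Set
open scoped NNReal

/-- A two-variable auxiliary function satisfying Condition-A. -/
def ConditionA (ψ : ℝ≥0 → ℝ≥0 → ℝ≥0) : Prop :=
  Continuous (Function.uncurry ψ) ∧
  (∀ t, Monotone fun s => ψ s t) ∧
  (∀ s, Monotone fun t => ψ s t) ∧
  ψ 0 0 = 0 ∧
  ∀ t, ψ t 0 = 0 → t = 0

/-- `φ ∈ Φ`: monotonically increasing, continuous, `0 < φ(t) < t` for `t > 0`. -/
def InPhi (φ : ℝ≥0 → ℝ≥0) : Prop :=
  Monotone φ ∧ Continuous φ ∧ ∀ t, 0 < t → 0 < φ t ∧ φ t < t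

theorem stmt_16 {X : Type*} [MetricSpace X] (K : Set X) (hK : K.Nonempty)
    (A B S T : X → X)
    (hA : MapsTo A K K) (hB : MapsTo B K K) (hS : MapsTo S K K) (hT : MapsTo T K K)
    (ψ : ℝ≥0 → ℝ≥0 → ℝ≥0) (hψ : ConditionA ψ)
    (φ : ℝ≥0 → ℝ≥0) (hφ : InPhi φ)
    (hcontr : ∀ x ∈ K, ∀ y ∈ K,
      ψ (nndist (S x) (T y)) (nndist (S x) (T y)) ≤
        φ (max (ψ (nndist (A x) (B y)) (nndist (A x) (S x)))
          (max (ψ (nndist (A x) (B y)) (nndist (B y) (T y)))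
          (max (ψ (nndist (A x) (S x)) (nndist (B y) (T y)))
          (max (ψ (nndist (B y) (T y)) (nndist (A x) (S x)))
          (max (min (ψ (nndist (B y) (S x)) (nndist (A x) (S x)))
                    (ψ (nndist (A x) (T y)) (nndist (B y) (T y))))
               (min (ψ (nndist (B y) (S x)) (nndist (B y) (T y)))
                    (ψ (nndist (A x) (T y)) (nndist (A x) (S x))))))))))
    (x : ℕ → X) (hx : ∀ n, x n ∈ K) (y : ℕ → X)
    (hy_even : ∀ n, y (2 * n) = T (x (2 * n)) ∧ T (x (2 * n)) = A (x (2 * n + 1)))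
    (hy_odd : ∀ n, y (2 * n + 1) = S (x (2 * n + 1)) ∧
      S (x (2 * n + 1)) = B (x (2 * n + 2))) :
    CauchySeq y := by
  classical
  obtain ⟨hψc, hψ1, hψ2, hψ00, hψ0⟩ := hψ
  obtain ⟨hφm, hφc, hφlt⟩ := hφ
  -- tendsto through ψ
  have tendstoψ : ∀ {f g : ℕ → ℝ≥0} {a b : ℝ≥0},
      Filter.Tendsto f Filter.atTop (nhds a) → Filter.Tendsto g Filter.atTop (nhds b) →
      Filter.Tendsto (fun n => ψ (f n) (g n)) Filter.atTop (nhds (ψ a b)) := by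
    intro f g a b hf hg
    have := (hψc.tendsto (a, b)).comp (hf.prodMk_nhds hg)
    simpa [Function.uncurry, Function.comp_def] using this
  set d : ℕ → ℝ≥0 := fun n => nndist (y n) (y (n + 1)) with hd
  have hcoe : ∀ n, (d n : ℝ) = dist (y n) (y (n + 1)) := fun n => coe_nndist _ _
  -- abstract step lemma
  have key : ∀ a b M : ℝ≥0,
      M ≤ max (ψ a a) (max (ψ a b) (max (ψ b a) (max (ψ 0 a) (ψ 0 b)))) →
      ψ b b ≤ φ M → b ≤ a ∧ ψ b b ≤ φ (ψ a a) := by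
    intro a b M hM h
    rcases le_or_gt b a with hba | hab
    · refine ⟨hba, h.trans (hφm ?_)⟩
      have h1 : ψ a b ≤ ψ a a := hψ2 a hba
      have h2 : ψ b a ≤ ψ a a := hψ1 a hba
      have h3 : ψ 0 a ≤ ψ a a := hψ1 a (zero_le : (0:ℝ≥0) ≤ a)
      have h4 : ψ 0 b ≤ ψ a a := le_trans (hψ2 0 hba) h3
      exact hM.trans (by simp only [max_le_iff]; exact ⟨le_refl _, h1, h2, h3, h4⟩)
    · exfalso
      have hba : a ≤ b := hab.le
      have hMb : M ≤ ψ b b := by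
        have h1 : ψ a a ≤ ψ b b := le_trans (hψ1 a hba) (hψ2 b hba)
        have h2 : ψ a b ≤ ψ b b := hψ1 b hba
        have h3 : ψ b a ≤ ψ b b := hψ2 b hba
        have h4 : ψ 0 a ≤ ψ b b := le_trans (hψ1 a (zero_le : (0:ℝ≥0) ≤ a)) h1
        have h5 : ψ 0 b ≤ ψ b b := hψ1 b (zero_le : (0:ℝ≥0) ≤ b)
        exact hM.trans (by simp only [max_le_iff]; exact ⟨h1, h2, h3, h4, h5⟩)
      have hle : ψ b b ≤ φ (ψ b b) := h.trans (hφm hMb)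
      rcases (zero_le : (0:ℝ≥0) ≤ ψ b b).eq_or_lt with hz | hz
      · have hb0 : ψ b 0 = 0 := le_antisymm ((hψ2 b (zero_le : (0:ℝ≥0) ≤ b)).trans hz.ge) zero_le
        have : b = 0 := hψ0 b hb0
        exact absurd hab (by simp [this])
      · exact absurd hle (not_le.2 (hφlt _ hz).2)
  have p1 : ∀ {x a2 b2 c2 d2 e2 : ℝ≥0}, x ≤ a2 → x ≤ max a2 (max b2 (max c2 (max d2 e2))) :=
    fun h => h.trans (le_max_left _ _)
  have p2 : ∀ {x a2 b2 c2 d2 e2 : ℝ≥0}, x ≤ b2 → x ≤ max a2 (max b2 (max c2 (max d2 e2))) :=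
    fun h => h.trans ((le_max_left _ _).trans (le_max_right _ _))
  have p3 : ∀ {x a2 b2 c2 d2 e2 : ℝ≥0}, x ≤ c2 → x ≤ max a2 (max b2 (max c2 (max d2 e2))) :=
    fun h => h.trans ((le_max_left _ _).trans ((le_max_right _ _).trans (le_max_right _ _)))
  have p4 : ∀ {x a2 b2 c2 d2 e2 : ℝ≥0}, x ≤ d2 → x ≤ max a2 (max b2 (max c2 (max d2 e2))) :=
    fun h => h.trans ((le_max_left _ _).trans
      ((le_max_right _ _).trans ((le_max_right _ _).trans (le_max_right _ _))))
  have p5 : ∀ {x a2 b2 c2 d2 e2 : ℝ≥0}, x ≤ e2 → x ≤ max a2 (max b2 (max c2 (max d2 e2))) :=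
    fun h => h.trans ((le_max_right _ _).trans
      ((le_max_right _ _).trans ((le_max_right _ _).trans (le_max_right _ _))))
  -- identities for y
  have hyS : ∀ n, S (x (2 * n + 1)) = y (2 * n + 1) := fun n => (hy_odd n).1.symm
  have hyT : ∀ n, T (x (2 * n)) = y (2 * n) := fun n => (hy_even n).1.symm
  have hyA : ∀ n, A (x (2 * n + 1)) = y (2 * n) := fun n =>
    ((hy_even n).1.trans (hy_even n).2).symm
  have hyB : ∀ n, B (x (2 * n + 2)) = y (2 * n + 1) := fun n =>
    ((hy_odd n).1.trans (hy_odd n).2).symm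
  -- general pair inequality
  have pair : ∀ i j : ℕ,
      ψ (nndist (y (2 * j + 1)) (y (2 * i + 2))) (nndist (y (2 * j + 1)) (y (2 * i + 2))) ≤
        φ (max (ψ (nndist (y (2 * j)) (y (2 * i + 1))) (nndist (y (2 * j)) (y (2 * j + 1))))
          (max (ψ (nndist (y (2 * j)) (y (2 * i + 1))) (nndist (y (2 * i + 1)) (y (2 * i + 2))))
          (max (ψ (nndist (y (2 * j)) (y (2 * j + 1))) (nndist (y (2 * i + 1)) (y (2 * i + 2))))
          (max (ψ (nndist (y (2 * i + 1)) (y (2 * i + 2))) (nndist (y (2 * j)) (y (2 * j + 1))))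
          (max (min (ψ (nndist (y (2 * i + 1)) (y (2 * j + 1))) (nndist (y (2 * j)) (y (2 * j + 1))))
                    (ψ (nndist (y (2 * j)) (y (2 * i + 2))) (nndist (y (2 * i + 1)) (y (2 * i + 2)))))
               (min (ψ (nndist (y (2 * i + 1)) (y (2 * j + 1))) (nndist (y (2 * i + 1)) (y (2 * i + 2))))
                    (ψ (nndist (y (2 * j)) (y (2 * i + 2))) (nndist (y (2 * j)) (y (2 * j + 1)))))))))) := by
    intro i j
    have h := hcontr (x (2 * j + 1)) (hx _) (x (2 * i + 2)) (hx _)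
    have hT' : T (x (2 * i + 2)) = y (2 * i + 2) := by
      have := hyT (i + 1)
      rwa [show 2 * (i + 1) = 2 * i + 2 by ring] at this
    rwa [hyS j, hyA j, hyB i, hT'] at h
  -- step inequality for consecutive distances
  have step : ∀ n, d (n + 1) ≤ d n ∧ ψ (d (n + 1)) (d (n + 1)) ≤ φ (ψ (d n) (d n)) := by
    intro n
    rcases Nat.even_or_odd n with ⟨m, hm⟩ | ⟨m, hm⟩
    · -- n = 2m
      have hn : n = 2 * m := by omega
      subst hn
      have h := pair m m
      rw [nndist_self] at h
      refine key _ _ _ ?_ h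
      exact max_le (p1 le_rfl) (max_le (p2 le_rfl) (max_le (p2 le_rfl)
        (max_le (p3 le_rfl) (max_le (p4 (min_le_left _ _)) (p5 (min_le_left _ _))))))
    · -- n = 2m + 1
      have hn : n = 2 * m + 1 := by omega
      subst hn
      have h := pair m (m + 1)
      rw [show 2 * (m + 1) + 1 = 2 * m + 3 by ring, show 2 * (m + 1) = 2 * m + 2 by ring,
        nndist_comm (y (2 * m + 3)) (y (2 * m + 2)),
        nndist_comm (y (2 * m + 2)) (y (2 * m + 1)), nndist_self] at h
      refine key _ _ _ ?_ h
      exact max_le (p2 le_rfl) (max_le (p1 le_rfl) (max_le (p3 le_rfl)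
        (max_le (p2 le_rfl) (max_le (p4 (min_le_right _ _)) (p5 (min_le_right _ _))))))
  have hanti : Antitone d := antitone_nat_of_succ_le fun n => (step n).1
  -- the consecutive distances tend to 0
  have hd0 : Filter.Tendsto d Filter.atTop (nhds 0) := by
    have hlim : Filter.Tendsto d Filter.atTop (nhds (⨅ n, d n)) :=
      tendsto_atTop_ciInf hanti (OrderBot.bddBelow _)
    set r := ⨅ n, d n with hr
    have h1 : Filter.Tendsto (fun n => ψ (d n) (d n)) Filter.atTop (nhds (ψ r r)) :=
      tendstoψ hlim hlim
    have h2 : Filter.Tendsto (fun n => ψ (d (n + 1)) (d (n + 1))) Filter.atTop (nhds (ψ r r)) :=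
      h1.comp (Filter.tendsto_add_atTop_nat 1)
    have h3 : Filter.Tendsto (fun n => φ (ψ (d n) (d n))) Filter.atTop (nhds (φ (ψ r r))) :=
      (hφc.tendsto _).comp h1
    have h4 : ψ r r ≤ φ (ψ r r) := le_of_tendsto_of_tendsto' h2 h3 fun n => (step n).2
    have hψr : ψ r r = 0 := by
      rcases (zero_le : (0:ℝ≥0) ≤ ψ r r).eq_or_lt with hz | hz
      · exact hz.symm
      · exact absurd h4 (not_le.2 (hφlt _ hz).2)
    have hr0 : r = 0 := by
      exact hψ0 r (le_antisymm ((hψ2 r (zero_le : (0:ℝ≥0) ≤ r)).trans (le_of_eq hψr)) zero_le)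
    rwa [hr0] at hlim
  -- now prove Cauchy by contradiction
  by_contra hnc
  rw [Metric.cauchySeq_iff] at hnc
  push_neg at hnc
  obtain ⟨ε, hε, hN⟩ := hnc
  -- construction of subsequences with correct parities
  have claim : ∀ k : ℕ, ∃ i j : ℕ, k ≤ 2 * j ∧ k ≤ 2 * i + 1 ∧
      |dist (y (2 * j + 1)) (y (2 * i + 2)) - ε| ≤ 3 * (d (k + 2) : ℝ) := by
    intro k
    obtain ⟨m, hm, n, hn, hmn⟩ := hN (k + 2)
    obtain ⟨mm, nn, hnnk, hnm, hdist⟩ :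
        ∃ mm nn, k + 2 ≤ nn ∧ nn < mm ∧ ε ≤ dist (y mm) (y nn) := by
      rcases lt_trichotomy m n with h | h | h
      · exact ⟨n, m, hm, h, by rwa [dist_comm]⟩
      · subst h; simp [dist_self] at hmn; linarith
      · exact ⟨m, n, hn, h, hmn⟩
    have hP : ∃ l, nn < l ∧ ε ≤ dist (y l) (y nn) := ⟨mm, hnm, hdist⟩
    set m0 := Nat.find hP with hm0def
    obtain ⟨hm0gt, hm0dist⟩ : nn < m0 ∧ ε ≤ dist (y m0) (y nn) := Nat.find_spec hP
    have hub : dist (y m0) (y nn) ≤ ε + (d (m0 - 1) : ℝ) := by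
      rcases eq_or_lt_of_le (Nat.succ_le_of_lt hm0gt) with heq | hlt
      · -- m0 = nn + 1
        have : dist (y m0) (y nn) = (d (m0 - 1) : ℝ) := by
          rw [show m0 - 1 = nn by omega, hcoe nn, show nn + 1 = m0 from heq]
          exact dist_comm _ _
        rw [this]; linarith
      · have hnot : ¬(nn < m0 - 1 ∧ ε ≤ dist (y (m0 - 1)) (y nn)) :=
          Nat.find_min hP (by omega)
        have hlt' : dist (y (m0 - 1)) (y nn) < ε := by
          by_contra hge
          exact hnot ⟨by omega, le_of_not_gt hge⟩
        have htri : dist (y m0) (y nn) ≤ dist (y m0) (y (m0 - 1)) + dist (y (m0 - 1)) (y nn) :=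
          dist_triangle _ _ _
        have hdd : dist (y m0) (y (m0 - 1)) = (d (m0 - 1) : ℝ) := by
          rw [hcoe (m0 - 1), show m0 - 1 + 1 = m0 by omega]
          exact dist_comm _ _
        linarith
    have hdm0 : (d (m0 - 1) : ℝ) ≤ (d (k + 2) : ℝ) := by
      exact_mod_cast hanti (by omega : k + 2 ≤ m0 - 1)
    -- m0 - 1 ≥ nn ≥ k+2, m0 ≥ k+3
    -- choose parities
    obtain ⟨p, hpodd, hpm0, hpk⟩ : ∃ p, Odd p ∧ dist (y p) (y m0) ≤ (d (k + 2) : ℝ) ∧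
        k + 1 ≤ p := by
      rcases Nat.even_or_odd m0 with he | ho
      · refine ⟨m0 + 1, by rcases he with ⟨t, ht⟩; exact ⟨t, by omega⟩, ?_, by omega⟩
        rw [dist_comm, ← coe_nndist]
        exact_mod_cast hanti (by omega : k + 2 ≤ m0)
      · exact ⟨m0, ho, by simp, by omega⟩
    obtain ⟨q, hqeven, hqnn, hqk⟩ : ∃ q, Even q ∧ dist (y q) (y nn) ≤ (d (k + 2) : ℝ) ∧
        k + 2 ≤ q := by
      rcases Nat.even_or_odd nn with he | ho
      · exact ⟨nn, he, by simp, hnnk⟩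
      · refine ⟨nn + 1, by rcases ho with ⟨t, ht⟩; exact ⟨t + 1, by omega⟩, ?_, by omega⟩
        rw [dist_comm, ← coe_nndist]
        exact_mod_cast hanti hnnk
    obtain ⟨j, hj⟩ : ∃ j, p = 2 * j + 1 := by
      rcases hpodd with ⟨t, ht⟩; exact ⟨t, by omega⟩
    obtain ⟨i, hi⟩ : ∃ i, q = 2 * i + 2 := by
      rcases hqeven with ⟨t, ht⟩; exact ⟨t - 1, by omega⟩
    refine ⟨i, j, by omega, by omega, ?_⟩
    rw [← hj, ← hi]
    have h1 : |dist (y p) (y q) - dist (y m0) (y nn)| ≤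
        dist (y p) (y m0) + dist (y q) (y nn) := by
      have := dist_dist_dist_le (y p) (y q) (y m0) (y nn)
      rwa [Real.dist_eq] at this
    have h2 : |dist (y m0) (y nn) - ε| ≤ (d (k + 2) : ℝ) := by
      rw [abs_le]; constructor <;> [linarith; linarith]
    calc |dist (y p) (y q) - ε| ≤
        |dist (y p) (y q) - dist (y m0) (y nn)| + |dist (y m0) (y nn) - ε| :=
          abs_sub_le _ _ _
      _ ≤ 3 * (d (k + 2) : ℝ) := by linarith
  choose I J hJ hI habs using claim
  set εn : ℝ≥0 := ε.toNNReal with hεn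
  have hεnc : (εn : ℝ) = ε := Real.coe_toNNReal ε hε.le
  have hεnpos : 0 < εn := Real.toNNReal_pos.2 hε
  -- limits
  have hd2 : Filter.Tendsto (fun k => (d (k + 2) : ℝ)) Filter.atTop (nhds 0) := by
    have := NNReal.tendsto_coe.2 (hd0.comp (Filter.tendsto_add_atTop_nat 2))
    simpa using this
  have nn0 : ∀ (f : ℕ → ℕ), (∀ k, k ≤ f k) →
      Filter.Tendsto (fun k => d (f k)) Filter.atTop (nhds 0) := by
    intro f hf
    exact tendsto_of_tendsto_of_tendsto_of_le_of_le tendsto_const_nhds hd0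
      (fun k => zero_le) (fun k => hanti (hf k))
  have tJ : Filter.Tendsto (fun k => d (2 * J k)) Filter.atTop (nhds 0) :=
    nn0 (fun k => 2 * J k) hJ
  have tI : Filter.Tendsto (fun k => d (2 * I k + 1)) Filter.atTop (nhds 0) :=
    nn0 (fun k => 2 * I k + 1) hI
  -- main distances converge to ε
  have tur : Filter.Tendsto (fun k => dist (y (2 * J k + 1)) (y (2 * I k + 2)))
      Filter.atTop (nhds ε) := by
    rw [tendsto_iff_dist_tendsto_zero]
    simp only [Real.dist_eq]
    refine squeeze_zero (fun k => abs_nonneg _) habs ?_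
    simpa using hd2.const_mul 3
  have tu : Filter.Tendsto (fun k => nndist (y (2 * J k + 1)) (y (2 * I k + 2)))
      Filter.atTop (nhds εn) := by
    refine NNReal.tendsto_coe.1 ?_
    simpa only [coe_nndist, hεnc] using tur
  -- auxiliary distance limits, via real squeeze against tur
  have aux : ∀ (f g : ℕ → ℕ),
      (∀ k, dist (y (f k)) (y (2 * J k + 1)) ≤ (d (2 * J k) : ℝ) + (d (2 * I k + 1) : ℝ)) →
      (∀ k, dist (y (g k)) (y (2 * I k + 2)) ≤ (d (2 * J k) : ℝ) + (d (2 * I k + 1) : ℝ)) →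
      Filter.Tendsto (fun k => nndist (y (f k)) (y (g k))) Filter.atTop (nhds εn) := by
    intro f g hf hg
    refine NNReal.tendsto_coe.1 ?_
    rw [hεnc, tendsto_iff_dist_tendsto_zero]
    have hb : ∀ k, dist ((nndist (y (f k)) (y (g k)) : ℝ)) ε ≤
        (2 * ((d (2 * J k) : ℝ) + (d (2 * I k + 1) : ℝ))) +
          |dist (y (2 * J k + 1)) (y (2 * I k + 2)) - ε| := by
      intro k
      have h1 := dist_dist_dist_le (y (f k)) (y (g k)) (y (2 * J k + 1)) (y (2 * I k + 2))
      rw [Real.dist_eq] at h1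
      have h2 := abs_sub_le (dist (y (f k)) (y (g k)))
        (dist (y (2 * J k + 1)) (y (2 * I k + 2))) ε
      rw [coe_nndist, Real.dist_eq]
      have := hf k; have := hg k
      linarith
    refine squeeze_zero (fun k => dist_nonneg) hb ?_
    have hz : Filter.Tendsto (fun k => (d (2 * J k) : ℝ) + (d (2 * I k + 1) : ℝ))
        Filter.atTop (nhds 0) := by
      have h1 := NNReal.tendsto_coe.2 tJ
      have h2 := NNReal.tendsto_coe.2 tI
      simpa using h1.add h2
    have habs0 : Filter.Tendsto (fun k => |dist (y (2 * J k + 1)) (y (2 * I k + 2)) - ε|)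
        Filter.atTop (nhds 0) := by
      have := tur
      rw [tendsto_iff_dist_tendsto_zero] at this
      simpa [Real.dist_eq] using this
    simpa using (hz.const_mul 2).add habs0
  have tv : Filter.Tendsto (fun k => nndist (y (2 * J k)) (y (2 * I k + 1)))
      Filter.atTop (nhds εn) := by
    refine aux (fun k => 2 * J k) (fun k => 2 * I k + 1) (fun k => ?_) (fun k => ?_)
    · rw [← coe_nndist]
      have : (nndist (y (2 * J k)) (y (2 * J k + 1)) : ℝ) = (d (2 * J k) : ℝ) := rfl
      rw [this]
      exact le_add_of_nonneg_right (NNReal.coe_nonneg _)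
    · rw [← coe_nndist]
      have : (nndist (y (2 * I k + 1)) (y (2 * I k + 2)) : ℝ) = (d (2 * I k + 1) : ℝ) := rfl
      rw [this]
      exact le_add_of_nonneg_left (NNReal.coe_nonneg _)
  have tw1 : Filter.Tendsto (fun k => nndist (y (2 * I k + 1)) (y (2 * J k + 1)))
      Filter.atTop (nhds εn) := by
    have h := aux (fun k => 2 * J k + 1) (fun k => 2 * I k + 1) (fun k => ?_) (fun k => ?_)
    · simpa only [nndist_comm (y (2 * J _ + 1)) (y (2 * I _ + 1))] using h
    · simp only [dist_self]
      positivity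
    · rw [← coe_nndist]
      have : (nndist (y (2 * I k + 1)) (y (2 * I k + 2)) : ℝ) = (d (2 * I k + 1) : ℝ) := rfl
      rw [this]
      exact le_add_of_nonneg_left (NNReal.coe_nonneg _)
  have tw2 : Filter.Tendsto (fun k => nndist (y (2 * J k)) (y (2 * I k + 2)))
      Filter.atTop (nhds εn) := by
    refine aux (fun k => 2 * J k) (fun k => 2 * I k + 2) (fun k => ?_) (fun k => ?_)
    · rw [← coe_nndist]
      have : (nndist (y (2 * J k)) (y (2 * J k + 1)) : ℝ) = (d (2 * J k) : ℝ) := rfl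
      rw [this]
      exact le_add_of_nonneg_right (NNReal.coe_nonneg _)
    · simp only [dist_self]
      positivity
  -- pass to the limit in the contractive inequality
  have hL : Filter.Tendsto
      (fun k => ψ (nndist (y (2 * J k + 1)) (y (2 * I k + 2)))
        (nndist (y (2 * J k + 1)) (y (2 * I k + 2)))) Filter.atTop (nhds (ψ εn εn)) :=
    tendstoψ tu tu
  have hR : Filter.Tendsto
      (fun k => max (ψ (nndist (y (2 * J k)) (y (2 * I k + 1))) (d (2 * J k)))
          (max (ψ (nndist (y (2 * J k)) (y (2 * I k + 1))) (d (2 * I k + 1)))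
          (max (ψ (d (2 * J k)) (d (2 * I k + 1)))
          (max (ψ (d (2 * I k + 1)) (d (2 * J k)))
          (max (min (ψ (nndist (y (2 * I k + 1)) (y (2 * J k + 1))) (d (2 * J k)))
                    (ψ (nndist (y (2 * J k)) (y (2 * I k + 2))) (d (2 * I k + 1))))
               (min (ψ (nndist (y (2 * I k + 1)) (y (2 * J k + 1))) (d (2 * I k + 1)))
                    (ψ (nndist (y (2 * J k)) (y (2 * I k + 2))) (d (2 * J k)))))))))
      Filter.atTop
      (nhds (max (ψ εn 0) (max (ψ εn 0) (max (ψ 0 0) (max (ψ 0 0)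
        (max (min (ψ εn 0) (ψ εn 0)) (min (ψ εn 0) (ψ εn 0)))))))) := by
    exact (tendstoψ tv tJ).max ((tendstoψ tv tI).max ((tendstoψ tJ tI).max
      ((tendstoψ tI tJ).max (((tendstoψ tw1 tJ).min (tendstoψ tw2 tI)).max
        ((tendstoψ tw1 tI).min (tendstoψ tw2 tJ))))))
  have hlimval : max (ψ εn 0) (max (ψ εn 0) (max (ψ 0 0) (max (ψ 0 0)
      (max (min (ψ εn 0) (ψ εn 0)) (min (ψ εn 0) (ψ εn 0)))))) = ψ εn 0 := by
    simp [hψ00, min_self, max_self]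
  have hfin : ψ εn εn ≤ φ (ψ εn 0) := by
    rw [← hlimval]
    refine le_of_tendsto_of_tendsto' hL ((hφc.tendsto _).comp hR) fun k => ?_
    have h := pair (I k) (J k)
    simpa only [hd, Nat.add_assoc, Nat.reduceAdd, Function.comp_apply] using h
  rcases (zero_le : (0:ℝ≥0) ≤ ψ εn 0).eq_or_lt with hz | hz
  · have : εn = 0 := hψ0 εn hz.symm
    exact absurd hεnpos (by simp [this])
  · have h1 : φ (ψ εn 0) < ψ εn 0 := (hφlt _ hz).2
    have h2 : ψ εn 0 ≤ ψ εn εn := hψ2 εn (zero_le : (0:ℝ≥0) ≤ εn)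
    exact absurd hfin (not_le.2 (lt_of_lt_of_le h1 h2))
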